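/- For any five matrices M, P₀, P₁, P₂, P₃ in SL(2,ℂ), define s₃(C₁,C₂,C₃) = tr(C₁)·tr(C₃C₂) + tr(C₂)·tr(C₃C₁) + tr(C₃)·tr(C₂C₁) − tr(C₃)·tr(C₂)·tr(C₁) − 2·tr(C₃C₂C₁) and z(C,D) = tr(C·D) − (1/2)·tr(C)·tr(D). Then Σ_{k=0}^{3} (−1)^k · z(M, P_k) · s₃(P_{k₁}, P_{k₂}, P_{k₃}) = 0, where for each k the indices k₁ < k₂ < k₃ list {0,1,2,3} \ {k} in increasing order. -/
import Mathlib

open Matrix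

/-- `s₃(C₁,C₂,C₃) = tr(C₁)tr(C₃C₂) + tr(C₂)tr(C₃C₁) + tr(C₃)tr(C₂C₁)
   − tr(C₃)tr(C₂)tr(C₁) − 2 tr(C₃C₂C₁)`. -/
noncomputable def s3 (C1 C2 C3 : Matrix (Fin 2) (Fin 2) ℂ) : ℂ :=
  C1.trace * (C3 * C2).trace + C2.trace * (C3 * C1).trace + C3.trace * (C2 * C1).trace
    - C3.trace * C2.trace * C1.trace - 2 * (C3 * C2 * C1).trace

/-- `z(C,D) = tr(CD) − (1/2) tr(C) tr(D)`. -/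
noncomputable def zf (C D : Matrix (Fin 2) (Fin 2) ℂ) : ℂ :=
  (C * D).trace - (1 / 2) * C.trace * D.trace

/-- Type 2 relation:
`Σ_{k=0}^{3} (−1)^k z(M, P_k) s₃(P_{k₁}, P_{k₂}, P_{k₃}) = 0`, where for each `k`
the indices `k₁ < k₂ < k₃` list `{0,1,2,3} \ {k}` in increasing order. -/
theorem type2_relation (M : Matrix (Fin 2) (Fin 2) ℂ)
    (P : Fin 4 → Matrix (Fin 2) (Fin 2) ℂ)
    (hM : M.det = 1) (hP : ∀ k, (P k).det = 1) :
    zf M (P 0) * s3 (P 1) (P 2) (P 3) - zf M (P 1) * s3 (P 0) (P 2) (P 3)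
      + zf M (P 2) * s3 (P 0) (P 1) (P 3) - zf M (P 3) * s3 (P 0) (P 1) (P 2) = 0 := by
  simp only [zf, s3, Matrix.trace_fin_two, Matrix.mul_apply, Fin.sum_univ_two]
  ring
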